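/- Let α, β be real numbers and set μ := α + β, ν := α − β. Then in ℝ[[q]]: (1 + 2∑_{n≥1} cos(4nα) q^{2n²})·(1 + 2∑_{n≥1} cos(4nβ) q^{2n²}) = (1 + 2∑_{n≥1} cos(4nμ) q^{4n²})·(1 + 2∑_{n≥1} cos(4nν) q^{4n²}) + 4·(∑_{n≥1} cos((4n−2)μ) q^{(2n−1)²})·(∑_{n≥1} cos((4n−2)ν) q^{(2n−1)²}). -/

import Mathlib

/-- The formal power series `∑_{n ≥ 1} c(n) q^{e(n)}` in `ℝ[[q]]`, defined coefficientwise.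
(For each exponent function `e` used here, any `n ≥ 1` with `e n = k` satisfies `n ≤ k + 1`,
so the truncated range captures every term.) -/
noncomputable def mkSum (e : ℕ → ℕ) (c : ℕ → ℝ) : PowerSeries ℝ :=
  PowerSeries.mk fun k => ∑ n ∈ Finset.range (k + 2), if 1 ≤ n ∧ e n = k then c n else 0

namespace CD

lemma sum_ite_reindex {α β : Type*} {P : α → Prop} {Q : β → Prop}
    [DecidablePred P] [DecidablePred Q]
    {B : Finset α} {C : Finset β} {F : α → ℝ} {G : β → ℝ}
    (I : α → β) (J : β → α)
    (hPB : ∀ p, P p → p ∈ B) (hQC : ∀ p, Q p → p ∈ C)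
    (hI : ∀ p, P p → Q (I p)) (hJ : ∀ p, Q p → P (J p))
    (hJI : ∀ p, P p → J (I p) = p) (hIJ : ∀ p, Q p → I (J p) = p)
    (hFG : ∀ p, P p → G (I p) = F p) :
    (∑ p ∈ B, if P p then F p else 0) = ∑ p ∈ C, if Q p then G p else 0 := by
  rw [← Finset.sum_filter, ← Finset.sum_filter]
  refine Finset.sum_nbij' I J ?_ ?_ ?_ ?_ ?_
  · intro a ha
    rw [Finset.mem_filter] at *
    exact ⟨hQC _ (hI a ha.2), hI a ha.2⟩
  · intro a ha
    rw [Finset.mem_filter] at *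
    exact ⟨hPB _ (hJ a ha.2), hJ a ha.2⟩
  · intro a ha; exact hJI a (Finset.mem_filter.1 ha).2
  · intro a ha; exact hIJ a (Finset.mem_filter.1 ha).2
  · intro a ha; exact (hFG a (Finset.mem_filter.1 ha).2).symm

noncomputable def boxI (k : ℕ) : Finset ℤ := Finset.Icc (-(2 * (k : ℤ) + 2)) (2 * (k : ℤ) + 2)

noncomputable def box (k : ℕ) : Finset (ℤ × ℤ) := boxI k ×ˢ boxI k

lemma mem_boxI {k : ℕ} {m : ℤ} (h : m ^ 2 ≤ (k : ℤ)) : m ∈ boxI k := by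
  rw [boxI, Finset.mem_Icc]
  constructor <;> nlinarith [sq_nonneg (m + 1), sq_nonneg (m - 1)]

lemma ite_trichotomy (m : ℤ) (C : Prop) [Decidable C] (v : ℝ) :
    (if C then v else 0) = (if m = 0 ∧ C then v else 0)
      + ((if 1 ≤ m ∧ C then v else 0) + (if m ≤ -1 ∧ C then v else 0)) := by
  by_cases hC : C
  · simp only [hC, and_true]
    rcases lt_trichotomy m 0 with h | h | h <;> split_ifs <;>
      first | (exfalso; omega) | ring
  · simp [hC]

lemma half_split {P : ℤ × ℤ → Prop} [DecidablePred P] {B : Finset (ℤ × ℤ)}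
    (F X Y : ℤ × ℤ → ℝ)
    (hF : ∀ p, P p → F p = (Y p + X p) / 2)
    (hYX : (∑ p ∈ B, if P p then Y p else 0) = ∑ p ∈ B, if P p then X p else 0) :
    (∑ p ∈ B, if P p then F p else 0) = ∑ p ∈ B, if P p then X p else 0 := by
  have h1 : (∑ p ∈ B, if P p then F p else 0)
      = (∑ p ∈ B, ((if P p then Y p else 0) + (if P p then X p else 0)) / 2) := by
    refine Finset.sum_congr rfl fun p _ => ?_
    by_cases h : P p
    · simp [h, hF p h]
    · simp [h]
  rw [h1, ← Finset.sum_div, Finset.sum_add_distrib, hYX]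
  ring

lemma coeff_even (k : ℕ) (x : ℝ) (e : ℕ → ℕ) (d : ℤ) (hd : 1 ≤ d)
    (he : ∀ n : ℕ, (e n : ℤ) = d * (n : ℤ) ^ 2) {i : ℕ} (hik : i ≤ k) :
    (PowerSeries.coeff i) (1 + 2 * mkSum e fun n => Real.cos (4 * n * x))
      = ∑ m ∈ boxI k, if d * m ^ 2 = (i : ℤ) then Real.cos (4 * m * x) else 0 := by
  have hbnd : ∀ m : ℤ, d * m ^ 2 = (i : ℤ) → m ∈ boxI k := by
    intro m hm
    refine mem_boxI ?_
    nlinarith [sq_nonneg m, (Nat.cast_le (α := ℤ)).2 hik]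
  -- LHS computation
  rw [two_mul, map_add, map_add, PowerSeries.coeff_one, mkSum, PowerSeries.coeff_mk]
  -- split the RHS sum pointwise into three disjoint pieces
  have hsplit : (∑ m ∈ boxI k, if d * m ^ 2 = (i : ℤ) then Real.cos (4 * m * x) else 0)
      = (∑ m ∈ boxI k, if m = 0 ∧ d * m ^ 2 = (i : ℤ) then Real.cos (4 * m * x) else 0)
      + ((∑ m ∈ boxI k, if 1 ≤ m ∧ d * m ^ 2 = (i : ℤ) then Real.cos (4 * m * x) else 0)
      + (∑ m ∈ boxI k, if m ≤ -1 ∧ d * m ^ 2 = (i : ℤ) then Real.cos (4 * m * x) else 0)) := by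
    rw [← Finset.sum_add_distrib, ← Finset.sum_add_distrib]
    refine Finset.sum_congr rfl fun m _ => ?_
    have := ite_trichotomy m (d * m ^ 2 = (i : ℤ)) (Real.cos (4 * m * x))
    linarith
  rw [hsplit]
  -- zero piece
  have h0 : (∑ m ∈ boxI k, if m = 0 ∧ d * m ^ 2 = (i : ℤ) then Real.cos (4 * m * x) else 0)
      = if i = 0 then 1 else 0 := by
    rw [Finset.sum_eq_single_of_mem (0 : ℤ) (mem_boxI (by positivity))]
    · by_cases h : i = 0 <;> simp [h] <;> omega
    · intro b _ hb
      rw [if_neg]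
      rintro ⟨rfl, -⟩
      exact hb rfl
  -- negative piece equals positive piece
  have hneg : (∑ m ∈ boxI k, if m ≤ -1 ∧ d * m ^ 2 = (i : ℤ) then Real.cos (4 * m * x) else 0)
      = ∑ m ∈ boxI k, if 1 ≤ m ∧ d * m ^ 2 = (i : ℤ) then Real.cos (4 * m * x) else 0 := by
    refine sum_ite_reindex (fun m => -m) (fun m => -m)
      (fun m hm => hbnd m hm.2) (fun m hm => hbnd m hm.2) ?_ ?_ ?_ ?_ ?_
    · rintro m ⟨h1, h2⟩; exact ⟨by omega, by rw [neg_pow]; simpa using h2⟩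
    · rintro m ⟨h1, h2⟩; exact ⟨by omega, by rw [neg_pow]; simpa using h2⟩
    · intro m _; ring
    · intro m _; ring
    · intro m _
      have : ((-m : ℤ) : ℝ) = -(m : ℝ) := by push_cast; ring
      rw [this, show 4 * -(m : ℝ) * x = -(4 * m * x) by ring, Real.cos_neg]
  -- positive piece equals the ℕ-indexed sum
  have hpos : (∑ m ∈ boxI k, if 1 ≤ m ∧ d * m ^ 2 = (i : ℤ) then Real.cos (4 * m * x) else 0)
      = ∑ n ∈ Finset.range (i + 2), if 1 ≤ n ∧ e n = i then Real.cos (4 * n * x) else 0 := by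
    refine sum_ite_reindex (fun m => m.toNat) (fun n => (n : ℤ))
      (fun m hm => hbnd m hm.2) ?_ ?_ ?_ ?_ ?_ ?_
    · rintro n ⟨h1, h2⟩
      rw [Finset.mem_range]
      have h3 : n ≤ n ^ 2 := by nlinarith
      have h4 : (n : ℤ) ^ 2 ≤ d * (n : ℤ) ^ 2 := by nlinarith [sq_nonneg (n : ℤ)]
      have h5 : (n : ℤ) ≤ (i : ℤ) := by
        have := he n
        push_cast at *
        nlinarith
      omega
    · rintro m ⟨h1, h2⟩
      refine ⟨by omega, ?_⟩
      have hm : ((m.toNat : ℕ) : ℤ) = m := Int.toNat_of_nonneg (by omega)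
      have := he m.toNat
      rw [hm] at this
      omega
    · rintro n ⟨h1, h2⟩
      refine ⟨by omega, ?_⟩
      rw [← he n]
      omega
    · rintro m ⟨h1, h2⟩; omega
    · rintro n ⟨h1, h2⟩; simp
    · rintro m ⟨h1, h2⟩
      have hm : ((m.toNat : ℕ) : ℝ) = (m : ℝ) := by
        exact_mod_cast congrArg (Int.cast : ℤ → ℝ) (Int.toNat_of_nonneg (by omega))
      rw [hm]
  rw [h0, hneg, hpos]

lemma ite_dichotomy (m : ℤ) (C : Prop) [Decidable C] (v : ℝ) :
    (if C then v else 0) = (if 1 ≤ m ∧ C then v else 0) + (if m ≤ 0 ∧ C then v else 0) := by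
  by_cases hC : C
  · simp only [hC, and_true]
    rcases le_or_gt m 0 with h | h <;> split_ifs <;>
      first | (exfalso; omega) | ring
  · simp [hC]

lemma coeff_odd (k : ℕ) (x : ℝ) (e : ℕ → ℕ)
    (he : ∀ n : ℕ, 1 ≤ n → (e n : ℤ) = (2 * (n : ℤ) - 1) ^ 2) {i : ℕ} (hik : i ≤ k) :
    (PowerSeries.coeff i) (2 * mkSum e fun n => Real.cos ((4 * n - 2) * x))
      = ∑ m ∈ boxI k, if (2 * m - 1) ^ 2 = (i : ℤ) then Real.cos ((4 * m - 2) * x) else 0 := by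
  have hbnd : ∀ m : ℤ, (2 * m - 1) ^ 2 = (i : ℤ) → m ∈ boxI k := by
    intro m hm
    refine mem_boxI ?_
    have h2 : ((i : ℤ)) ≤ (k : ℤ) := by exact_mod_cast hik
    nlinarith [sq_nonneg (m - 1), sq_nonneg m]
  rw [two_mul, map_add, mkSum, PowerSeries.coeff_mk]
  have hsplit : (∑ m ∈ boxI k, if (2 * m - 1) ^ 2 = (i : ℤ) then Real.cos ((4 * m - 2) * x) else 0)
      = (∑ m ∈ boxI k, if 1 ≤ m ∧ (2 * m - 1) ^ 2 = (i : ℤ) then Real.cos ((4 * m - 2) * x) else 0)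
      + (∑ m ∈ boxI k, if m ≤ 0 ∧ (2 * m - 1) ^ 2 = (i : ℤ) then Real.cos ((4 * m - 2) * x) else 0) := by
    rw [← Finset.sum_add_distrib]
    refine Finset.sum_congr rfl fun m _ => ?_
    exact ite_dichotomy m _ _
  rw [hsplit]
  have hneg : (∑ m ∈ boxI k, if m ≤ 0 ∧ (2 * m - 1) ^ 2 = (i : ℤ) then Real.cos ((4 * m - 2) * x) else 0)
      = ∑ m ∈ boxI k, if 1 ≤ m ∧ (2 * m - 1) ^ 2 = (i : ℤ) then Real.cos ((4 * m - 2) * x) else 0 := by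
    refine sum_ite_reindex (fun m => 1 - m) (fun m => 1 - m)
      (fun m hm => hbnd m hm.2) (fun m hm => hbnd m hm.2) ?_ ?_ ?_ ?_ ?_
    · rintro m ⟨h1, h2⟩
      refine ⟨by omega, ?_⟩
      rw [show 2 * (1 - m) - 1 = -(2 * m - 1) by ring, neg_pow]
      simpa using h2
    · rintro m ⟨h1, h2⟩
      refine ⟨by omega, ?_⟩
      rw [show 2 * (1 - m) - 1 = -(2 * m - 1) by ring, neg_pow]
      simpa using h2
    · intro m _; ring
    · intro m _; ring
    · intro m _
      have h1 : ((1 - m : ℤ) : ℝ) = 1 - (m : ℝ) := by push_cast; ring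
      rw [h1, show 4 * (1 - (m : ℝ)) - 2 = -(4 * m - 2) by ring, neg_mul, Real.cos_neg]
  have hpos : (∑ m ∈ boxI k, if 1 ≤ m ∧ (2 * m - 1) ^ 2 = (i : ℤ) then Real.cos ((4 * m - 2) * x) else 0)
      = ∑ n ∈ Finset.range (i + 2), if 1 ≤ n ∧ e n = i then Real.cos ((4 * n - 2) * x) else 0 := by
    refine sum_ite_reindex (fun m => m.toNat) (fun n => (n : ℤ))
      (fun m hm => hbnd m hm.2) ?_ ?_ ?_ ?_ ?_ ?_
    · rintro n ⟨h1, h2⟩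
      rw [Finset.mem_range]
      have h3 := he n h1
      have h4 : (2 * (n : ℤ) - 1) ≤ (2 * (n : ℤ) - 1) ^ 2 := by nlinarith
      have h5 : (e n : ℤ) = (i : ℤ) := by exact_mod_cast h2
      omega
    · rintro m ⟨h1, h2⟩
      refine ⟨by omega, ?_⟩
      have hm : ((m.toNat : ℕ) : ℤ) = m := Int.toNat_of_nonneg (by omega)
      have h3 := he m.toNat (by omega)
      rw [hm] at h3
      omega
    · rintro n ⟨h1, h2⟩
      refine ⟨by omega, ?_⟩
      rw [← he n h1]
      omega
    · rintro m ⟨h1, h2⟩; omega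
    · rintro n ⟨h1, h2⟩; simp
    · rintro m ⟨h1, h2⟩
      have hm : ((m.toNat : ℕ) : ℝ) = (m : ℝ) := by
        exact_mod_cast congrArg (Int.cast : ℤ → ℝ) (Int.toNat_of_nonneg (by omega))
      rw [hm]
  rw [hneg, hpos]

lemma antidiag_collapse (k : ℕ) (a b : ℤ) (ha : 0 ≤ a) (hb : 0 ≤ b) (w : ℝ) :
    (∑ p ∈ Finset.HasAntidiagonal.antidiagonal k, if a = (p.1 : ℤ) ∧ b = (p.2 : ℤ) then w else 0)
      = if a + b = (k : ℤ) then w else 0 := by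
  by_cases h : a + b = (k : ℤ)
  · rw [if_pos h, Finset.sum_eq_single_of_mem (a.toNat, b.toNat)]
    · rw [if_pos]
      constructor <;> omega
    · rw [Finset.HasAntidiagonal.mem_antidiagonal]; omega
    · rintro ⟨p1, p2⟩ hp hne
      rw [if_neg]
      rintro ⟨h1, h2⟩
      exact hne (by ext <;> dsimp <;> omega)
  · rw [if_neg h]
    refine Finset.sum_eq_zero fun p hp => ?_
    rw [Finset.HasAntidiagonal.mem_antidiagonal] at hp
    rw [if_neg]
    rintro ⟨h1, h2⟩
    omega

lemma coeff_mul_box (k : ℕ) (S T : PowerSeries ℝ) (e₁ e₂ : ℤ → ℤ) (u v : ℤ → ℝ)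
    (he₁ : ∀ m, 0 ≤ e₁ m) (he₂ : ∀ m, 0 ≤ e₂ m)
    (hS : ∀ i, i ≤ k → (PowerSeries.coeff i) S
        = ∑ m ∈ boxI k, if e₁ m = (i : ℤ) then u m else 0)
    (hT : ∀ j, j ≤ k → (PowerSeries.coeff j) T
        = ∑ n ∈ boxI k, if e₂ n = (j : ℤ) then v n else 0) :
    (PowerSeries.coeff k) (S * T)
      = ∑ p ∈ box k, if e₁ p.1 + e₂ p.2 = (k : ℤ) then u p.1 * v p.2 else 0 := by
  rw [PowerSeries.coeff_mul]
  calc ∑ p ∈ Finset.HasAntidiagonal.antidiagonal k, (PowerSeries.coeff p.1) S * (PowerSeries.coeff p.2) T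
      = ∑ p ∈ Finset.HasAntidiagonal.antidiagonal k, ∑ m ∈ boxI k, ∑ n ∈ boxI k,
          (if e₁ m = (p.1 : ℤ) ∧ e₂ n = (p.2 : ℤ) then u m * v n else 0) := by
        refine Finset.sum_congr rfl fun p hp => ?_
        rw [Finset.HasAntidiagonal.mem_antidiagonal] at hp
        rw [hS p.1 (by omega), hT p.2 (by omega), Finset.sum_mul_sum]
        refine Finset.sum_congr rfl fun m _ => Finset.sum_congr rfl fun n _ => ?_
        rw [ite_mul, zero_mul, mul_ite, mul_zero, ← ite_and]
    _ = ∑ m ∈ boxI k, ∑ n ∈ boxI k, ∑ p ∈ Finset.HasAntidiagonal.antidiagonal k,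
          (if e₁ m = (p.1 : ℤ) ∧ e₂ n = (p.2 : ℤ) then u m * v n else 0) := by
        rw [Finset.sum_comm]
        exact Finset.sum_congr rfl fun m _ => Finset.sum_comm
    _ = ∑ m ∈ boxI k, ∑ n ∈ boxI k, (if e₁ m + e₂ n = (k : ℤ) then u m * v n else 0) := by
        exact Finset.sum_congr rfl fun m _ => Finset.sum_congr rfl fun n _ =>
          antidiag_collapse k (e₁ m) (e₂ n) (he₁ m) (he₂ n) _
    _ = ∑ p ∈ box k, if e₁ p.1 + e₂ p.2 = (k : ℤ) then u p.1 * v p.2 else 0 := by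
        rw [box, Finset.sum_product]

lemma mem_box {k : ℕ} {p : ℤ × ℤ} (h1 : p.1 ^ 2 ≤ (k : ℤ)) (h2 : p.2 ^ 2 ≤ (k : ℤ)) :
    p ∈ box k := by
  rw [box, Finset.mem_product]; exact ⟨mem_boxI h1, mem_boxI h2⟩

lemma ite_parity_split (C D : Prop) [Decidable C] [Decidable D] (v : ℝ) :
    (if C then v else 0) = (if C ∧ D then v else 0) + (if C ∧ ¬D then v else 0) := by
  by_cases hC : C <;> by_cases hD : D <;> simp [hC, hD]

lemma twoCos (a b : ℝ) : Real.cos a * Real.cos b = (Real.cos (a - b) + Real.cos (a + b)) / 2 := by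
  have := Real.two_mul_cos_mul_cos a b
  linarith

lemma key (k : ℕ) (α β : ℝ) :
    (∑ p ∈ box k, if 2 * p.1 ^ 2 + 2 * p.2 ^ 2 = (k : ℤ)
        then Real.cos (4 * p.1 * α) * Real.cos (4 * p.2 * β) else 0)
    = (∑ p ∈ box k, if 4 * p.1 ^ 2 + 4 * p.2 ^ 2 = (k : ℤ)
        then Real.cos (4 * p.1 * (α + β)) * Real.cos (4 * p.2 * (α - β)) else 0)
    + (∑ p ∈ box k, if (2 * p.1 - 1) ^ 2 + (2 * p.2 - 1) ^ 2 = (k : ℤ)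
        then Real.cos ((4 * p.1 - 2) * (α + β)) * Real.cos ((4 * p.2 - 2) * (α - β)) else 0) := by
  have hk0 : (0 : ℤ) ≤ (k : ℤ) := Int.natCast_nonneg k
  -- bounds
  have bndL : ∀ p : ℤ × ℤ, 2 * p.1 ^ 2 + 2 * p.2 ^ 2 = (k : ℤ) → p ∈ box k := by
    rintro ⟨m, n⟩ h
    exact mem_box (by nlinarith [sq_nonneg m, sq_nonneg n]) (by nlinarith [sq_nonneg m, sq_nonneg n])
  have bndS : ∀ p : ℤ × ℤ, p.1 ^ 2 + p.2 ^ 2 = (k : ℤ) → p ∈ box k := by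
    rintro ⟨m, n⟩ h
    exact mem_box (by nlinarith [sq_nonneg n]) (by nlinarith [sq_nonneg m])
  have bndE : ∀ p : ℤ × ℤ, 4 * p.1 ^ 2 + 4 * p.2 ^ 2 = (k : ℤ) → p ∈ box k := by
    rintro ⟨m, n⟩ h
    exact mem_box (by nlinarith [sq_nonneg m, sq_nonneg n]) (by nlinarith [sq_nonneg m, sq_nonneg n])
  have bndO : ∀ p : ℤ × ℤ, (2 * p.1 - 1) ^ 2 + (2 * p.2 - 1) ^ 2 = (k : ℤ) → p ∈ box k := by
    rintro ⟨m, n⟩ h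
    have h1 : (2 * m - 1) ^ 2 ≤ (k : ℤ) := by nlinarith [sq_nonneg (2 * n - 1)]
    have h2 : (2 * n - 1) ^ 2 ≤ (k : ℤ) := by nlinarith [sq_nonneg (2 * m - 1)]
    refine mem_box ?_ ?_ <;> dsimp only <;>
      nlinarith [sq_nonneg (m - 1), sq_nonneg (m + 1), sq_nonneg (n - 1), sq_nonneg (n + 1)]
  -- Step 1: symmetrize the left-hand sum
  have hL : (∑ p ∈ box k, if 2 * p.1 ^ 2 + 2 * p.2 ^ 2 = (k : ℤ)
        then Real.cos (4 * p.1 * α) * Real.cos (4 * p.2 * β) else 0)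
      = ∑ p ∈ box k, if 2 * p.1 ^ 2 + 2 * p.2 ^ 2 = (k : ℤ)
        then Real.cos (4 * p.1 * α + 4 * p.2 * β) else 0 := by
    refine half_split _ _ (fun p => Real.cos (4 * p.1 * α - 4 * p.2 * β))
      (fun p _ => twoCos _ _) ?_
    refine sum_ite_reindex (fun p => (p.1, -p.2)) (fun p => (p.1, -p.2)) bndL bndL ?_ ?_ ?_ ?_ ?_
    · rintro ⟨m, n⟩ h; dsimp only at *; linear_combination h
    · rintro ⟨m, n⟩ h; dsimp only at *; linear_combination h
    · rintro ⟨m, n⟩ _; simp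
    · rintro ⟨m, n⟩ _; simp
    · rintro ⟨m, n⟩ _; dsimp only
      congr 1; push_cast; ring
  -- Step 2: symmetrize the even right-hand sum
  have hE : (∑ p ∈ box k, if 4 * p.1 ^ 2 + 4 * p.2 ^ 2 = (k : ℤ)
        then Real.cos (4 * p.1 * (α + β)) * Real.cos (4 * p.2 * (α - β)) else 0)
      = ∑ p ∈ box k, if 4 * p.1 ^ 2 + 4 * p.2 ^ 2 = (k : ℤ)
        then Real.cos (4 * p.1 * (α + β) + 4 * p.2 * (α - β)) else 0 := by
    refine half_split _ _ (fun p => Real.cos (4 * p.1 * (α + β) - 4 * p.2 * (α - β)))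
      (fun p _ => twoCos _ _) ?_
    refine sum_ite_reindex (fun p => (p.1, -p.2)) (fun p => (p.1, -p.2)) bndE bndE ?_ ?_ ?_ ?_ ?_
    · rintro ⟨m, n⟩ h; dsimp only at *; linear_combination h
    · rintro ⟨m, n⟩ h; dsimp only at *; linear_combination h
    · rintro ⟨m, n⟩ _; simp
    · rintro ⟨m, n⟩ _; simp
    · rintro ⟨m, n⟩ _; dsimp only
      congr 1; push_cast; ring
  -- Step 3: symmetrize the odd right-hand sum
  have hO : (∑ p ∈ box k, if (2 * p.1 - 1) ^ 2 + (2 * p.2 - 1) ^ 2 = (k : ℤ)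
        then Real.cos ((4 * p.1 - 2) * (α + β)) * Real.cos ((4 * p.2 - 2) * (α - β)) else 0)
      = ∑ p ∈ box k, if (2 * p.1 - 1) ^ 2 + (2 * p.2 - 1) ^ 2 = (k : ℤ)
        then Real.cos ((4 * p.1 - 2) * (α + β) + (4 * p.2 - 2) * (α - β)) else 0 := by
    refine half_split _ _ (fun p => Real.cos ((4 * p.1 - 2) * (α + β) - (4 * p.2 - 2) * (α - β)))
      (fun p _ => twoCos _ _) ?_
    refine sum_ite_reindex (fun p => (p.1, 1 - p.2)) (fun p => (p.1, 1 - p.2)) bndO bndO ?_ ?_ ?_ ?_ ?_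
    · rintro ⟨m, n⟩ h; dsimp only at *; linear_combination h
    · rintro ⟨m, n⟩ h; dsimp only at *; linear_combination h
    · rintro ⟨m, n⟩ _; simp
    · rintro ⟨m, n⟩ _; simp
    · rintro ⟨m, n⟩ _; dsimp only
      congr 1; push_cast; ring
  rw [hL, hE, hO]
  -- Step 4: split the left side by parity of p.1 + p.2
  have hsplit : (∑ p ∈ box k, if 2 * p.1 ^ 2 + 2 * p.2 ^ 2 = (k : ℤ)
        then Real.cos (4 * p.1 * α + 4 * p.2 * β) else 0)
      = (∑ p ∈ box k, if (2 * p.1 ^ 2 + 2 * p.2 ^ 2 = (k : ℤ)) ∧ Even (p.1 + p.2)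
        then Real.cos (4 * p.1 * α + 4 * p.2 * β) else 0)
      + (∑ p ∈ box k, if (2 * p.1 ^ 2 + 2 * p.2 ^ 2 = (k : ℤ)) ∧ ¬ Even (p.1 + p.2)
        then Real.cos (4 * p.1 * α + 4 * p.2 * β) else 0) := by
    rw [← Finset.sum_add_distrib]
    exact Finset.sum_congr rfl fun p _ => ite_parity_split _ _ _
  rw [hsplit]
  congr 1
  -- Step 5: even part
  · refine sum_ite_reindex (fun p => ((p.1 + p.2) / 2, (p.1 - p.2) / 2))
      (fun p => (p.1 + p.2, p.1 - p.2)) ?_ bndE ?_ ?_ ?_ ?_ ?_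
    · rintro ⟨m, n⟩ h; exact bndL _ h.1
    · rintro ⟨m, n⟩ ⟨h1, h2⟩; dsimp only at *
      rw [Int.even_iff] at h2
      obtain ⟨a, b, ha, hb⟩ : ∃ a b : ℤ, m + n = 2 * a ∧ m - n = 2 * b := by
        exact ⟨(m + n) / 2, (m - n) / 2, by omega, by omega⟩
      rw [show (m + n) / 2 = a by omega, show (m - n) / 2 = b by omega]
      linear_combination h1 - (m + n + 2 * a) * ha - (m - n + 2 * b) * hb
    · rintro ⟨m, n⟩ h; dsimp only at *
      constructor
      · linear_combination h
      · exact ⟨m, by ring⟩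
    · rintro ⟨m, n⟩ ⟨h1, h2⟩; dsimp only at *
      rw [Int.even_iff] at h2
      simp only [Prod.mk.injEq]
      constructor <;> omega
    · rintro ⟨m, n⟩ h; dsimp only at *
      simp only [Prod.mk.injEq]
      constructor <;> omega
    · rintro ⟨m, n⟩ ⟨h1, h2⟩; dsimp only at *
      rw [Int.even_iff] at h2
      congr 1
      obtain ⟨a, b, ha, hb⟩ : ∃ a b : ℤ, m + n = 2 * a ∧ m - n = 2 * b :=
        ⟨(m + n) / 2, (m - n) / 2, by omega, by omega⟩
      rw [show (m + n) / 2 = a by omega, show (m - n) / 2 = b by omega]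
      have hm : m = a + b := by omega
      have hn : n = a - b := by omega
      subst hm; subst hn
      push_cast; ring
  -- Step 6: odd part
  · refine sum_ite_reindex (fun p => ((p.1 + p.2 + 1) / 2, (p.1 - p.2 + 1) / 2))
      (fun p => (p.1 + p.2 - 1, p.1 - p.2)) ?_ bndO ?_ ?_ ?_ ?_ ?_
    · rintro ⟨m, n⟩ h; exact bndL _ h.1
    · rintro ⟨m, n⟩ ⟨h1, h2⟩; dsimp only at *
      rw [Int.even_iff] at h2
      obtain ⟨a, b, ha, hb⟩ : ∃ a b : ℤ, m + n = 2 * a - 1 ∧ m - n = 2 * b - 1 :=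
        ⟨(m + n + 1) / 2, (m - n + 1) / 2, by omega, by omega⟩
      rw [show (m + n + 1) / 2 = a by omega, show (m - n + 1) / 2 = b by omega]
      linear_combination h1 - (m + n + 2 * a - 1) * ha - (m - n + 2 * b - 1) * hb
    · rintro ⟨m, n⟩ h; dsimp only at *
      constructor
      · linear_combination h
      · rintro ⟨r, hr⟩; omega
    · rintro ⟨m, n⟩ ⟨h1, h2⟩; dsimp only at *
      rw [Int.even_iff] at h2
      simp only [Prod.mk.injEq]
      constructor <;> omega
    · rintro ⟨m, n⟩ h; dsimp only at *
      simp only [Prod.mk.injEq]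
      constructor <;> omega
    · rintro ⟨m, n⟩ ⟨h1, h2⟩; dsimp only at *
      rw [Int.even_iff] at h2
      congr 1
      obtain ⟨a, b, ha, hb⟩ : ∃ a b : ℤ, m + n = 2 * a - 1 ∧ m - n = 2 * b - 1 :=
        ⟨(m + n + 1) / 2, (m - n + 1) / 2, by omega, by omega⟩
      rw [show (m + n + 1) / 2 = a by omega, show (m - n + 1) / 2 = b by omega]
      have hm : m = a + b - 1 := by omega
      have hn : n = a - b := by omega
      subst hm; subst hn
      push_cast; ring

end CD

open CD in
/-- For real `α, β` with `μ := α + β` and `ν := α - β`, in `ℝ[[q]]`: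
`(1 + 2∑ cos(4nα) q^{2n²})(1 + 2∑ cos(4nβ) q^{2n²})
  = (1 + 2∑ cos(4nμ) q^{4n²})(1 + 2∑ cos(4nν) q^{4n²})
    + 4 (∑ cos((4n-2)μ) q^{(2n-1)²})(∑ cos((4n-2)ν) q^{(2n-1)²})`. -/
theorem cos_dissection_even (α β : ℝ) :
    (1 + 2 * mkSum (fun n => 2 * n ^ 2) fun n => Real.cos (4 * n * α)) *
      (1 + 2 * mkSum (fun n => 2 * n ^ 2) fun n => Real.cos (4 * n * β)) =
    (1 + 2 * mkSum (fun n => 4 * n ^ 2) fun n => Real.cos (4 * n * (α + β))) *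
      (1 + 2 * mkSum (fun n => 4 * n ^ 2) fun n => Real.cos (4 * n * (α - β))) +
    4 * ((mkSum (fun n => (2 * n - 1) ^ 2) fun n => Real.cos ((4 * n - 2) * (α + β))) *
      (mkSum (fun n => (2 * n - 1) ^ 2) fun n => Real.cos ((4 * n - 2) * (α - β)))) := by
  have h4 : (4 : PowerSeries ℝ) *
      ((mkSum (fun n => (2 * n - 1) ^ 2) fun n => Real.cos ((4 * n - 2) * (α + β))) *
        (mkSum (fun n => (2 * n - 1) ^ 2) fun n => Real.cos ((4 * n - 2) * (α - β))))
      = (2 * mkSum (fun n => (2 * n - 1) ^ 2) fun n => Real.cos ((4 * n - 2) * (α + β))) *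
        (2 * mkSum (fun n => (2 * n - 1) ^ 2) fun n => Real.cos ((4 * n - 2) * (α - β))) := by
    ring
  rw [h4]
  ext k
  rw [map_add]
  rw [coeff_mul_box k _ _ (fun m => 2 * m ^ 2) (fun m => 2 * m ^ 2)
    (fun m => Real.cos (4 * m * α)) (fun m => Real.cos (4 * m * β))
    (fun m => by positivity) (fun m => by positivity)
    (fun i hi => coeff_even k α _ 2 one_le_two (fun n => by push_cast; ring) hi)
    (fun j hj => coeff_even k β _ 2 one_le_two (fun n => by push_cast; ring) hj)]
  rw [coeff_mul_box k _ _ (fun m => 4 * m ^ 2) (fun m => 4 * m ^ 2)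
    (fun m => Real.cos (4 * m * (α + β))) (fun m => Real.cos (4 * m * (α - β)))
    (fun m => by positivity) (fun m => by positivity)
    (fun i hi => coeff_even k (α + β) _ 4 (by norm_num) (fun n => by push_cast; ring) hi)
    (fun j hj => coeff_even k (α - β) _ 4 (by norm_num) (fun n => by push_cast; ring) hj)]
  rw [coeff_mul_box k _ _ (fun m => (2 * m - 1) ^ 2) (fun m => (2 * m - 1) ^ 2)
    (fun m => Real.cos ((4 * m - 2) * (α + β))) (fun m => Real.cos ((4 * m - 2) * (α - β)))
    (fun m => sq_nonneg _) (fun m => sq_nonneg _)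
    (fun i hi => coeff_odd k (α + β) _
      (fun n hn => by push_cast [Nat.cast_sub (by omega : 1 ≤ 2 * n)]; ring) hi)
    (fun j hj => coeff_odd k (α - β) _
      (fun n hn => by push_cast [Nat.cast_sub (by omega : 1 ≤ 2 * n)]; ring) hj)]
  exact key k α β
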